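/- Suppose 0 < a < 1 and 1 ≤ b ≤ 1/a. Then the supremum of Rs(P1,P2) over all P1 ≥ 0 and P2 ≥ 0 equals (1/2)·log₂(1/a). -/

import Mathlib

/-- `g x = (1/2) * log_2 (1 + x)`. -/
noncomputable def g (x : ℝ) : ℝ := (1 / 2) * Real.logb 2 (1 + x)

/-- The achievable secrecy rate `Rs(P1, P2)` for the Gaussian wiretap channel with a
helping interferer, with channel gains `a`, `b` and powers `P1`, `P2`. -/
noncomputable def Rs (a b P1 P2 : ℝ) : ℝ :=
  if 1 + P2 ≤ a then 0
  else if 1 ≤ a then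
    -- case `1 ≤ a < 1 + P2`
    if 1 + P1 ≤ b then g P1 - g (a * P1 / (1 + P2))
    else if 1 ≤ b then max 0 (g (P1 + b * P2) - g (a * P1 + P2))
    else max 0 (g (P1 / (1 + b * P2)) - g (a * P1 / (1 + P2)))
  else
    -- case `a < 1`, with `β1 = (1+P1)/(1+a*P1)` and `β2 = a*(1+P1)/(1+a*P1+(1-a)*P2)`
    if 1 + P1 ≤ b then g P1 - g (a * P1 / (1 + P2))
    else if (1 + P1) / (1 + a * P1) ≤ b then g (P1 + b * P2) - g (a * P1 + P2)
    else if a * (1 + P1) / (1 + a * P1 + (1 - a) * P2) ≤ b then g P1 - g (a * P1)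
    else g (P1 / (1 + b * P2)) - g (a * P1 / (1 + P2))

open Filter Real Topology

private lemma ratio_tendsto (c p d q : ℝ) (hq : 0 < q) :
    Tendsto (fun t : ℝ => (c + p*t)/(d + q*t)) atTop (nhds (p/q)) := by
  have h0 : Tendsto (fun t : ℝ => t⁻¹) atTop (nhds 0) := tendsto_inv_atTop_zero
  have h1 : Tendsto (fun t : ℝ => (c * t⁻¹ + p)/(d * t⁻¹ + q)) atTop (nhds (p/q)) := by
    have := (((h0.const_mul c).add_const p).div ((h0.const_mul d).add_const q)
      (by simpa using hq.ne'))
    simp at this; exact this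
  refine h1.congr' ?_
  filter_upwards [eventually_gt_atTop (0:ℝ)] with t ht
  have := ht.ne'
  field_simp

private lemma half_logb_tendsto (c p d q : ℝ) (hq : 0 < q) (hp : 0 < p) :
    Tendsto (fun t : ℝ => (1/2) * Real.logb 2 ((c + p*t)/(d + q*t))) atTop
      (nhds ((1/2) * Real.logb 2 (p/q))) := by
  have hr := ratio_tendsto c p d q hq
  have hpq : (0:ℝ) < p/q := div_pos hp hq
  have hlog : Tendsto (fun t : ℝ => Real.log ((c + p*t)/(d + q*t))) atTop
      (nhds (Real.log (p/q))) := (Real.continuousAt_log hpq.ne').tendsto.comp hr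
  have := (hlog.div_const (Real.log 2)).const_mul (1/2 : ℝ)
  simpa [Real.logb] using this

/-- If `0 < a < 1` and `1 ≤ b ≤ 1/a`, the supremum of `Rs(P1,P2)` over all `P1 ≥ 0`, `P2 ≥ 0`
equals `(1/2) log₂ (1/a)`. -/
theorem stmt5 (a b : ℝ) (ha0 : 0 < a) (ha : a < 1) (hb1 : 1 ≤ b) (hb2 : b ≤ 1 / a) :
    IsLUB {r : ℝ | ∃ P1 P2 : ℝ, 0 ≤ P1 ∧ 0 ≤ P2 ∧ r = Rs a b P1 P2}
      ((1 / 2) * Real.logb 2 (1 / a)) := by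
  have hab : a * b ≤ 1 := by
    have := (le_div_iff₀ ha0).mp hb2
    linarith
  constructor
  · -- upper bound
    rintro r ⟨P1, P2, hP1, hP2, rfl⟩
    unfold Rs
    rw [if_neg (by linarith), if_neg (by linarith)]
    split_ifs with h1 h2 h3
    · -- 1 + P1 ≤ b
      have hg2 : 0 ≤ g (a * P1 / (1 + P2)) := by
        have : 0 ≤ a * P1 / (1 + P2) := by positivity
        exact mul_nonneg (by norm_num) (Real.logb_nonneg one_lt_two (by linarith))
      have hgle : g P1 ≤ (1/2) * Real.logb 2 (1/a) := by
        have h1a : 1 + P1 ≤ 1/a := le_trans h1 hb2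
        have := Real.logb_le_logb_of_le (b := 2) one_lt_two (by linarith : (0:ℝ) < 1 + P1) h1a
        unfold g; nlinarith [this]
      unfold g at *; linarith
    · -- β1 ≤ b
      have hkey : 1 + (P1 + b * P2) ≤ (1/a) * (1 + (a * P1 + P2)) := by
        rw [← sub_nonneg]
        have : (1/a) * (1 + (a * P1 + P2)) - (1 + (P1 + b * P2))
            = ((1 - a) + (1 - a*b) * P2) / a := by field_simp; ring
        rw [this]
        have : 0 ≤ (1 - a) + (1 - a*b) * P2 := by nlinarith
        positivity
      have hX : (0:ℝ) < 1 + (P1 + b * P2) := by nlinarith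
      have hY : (0:ℝ) < 1 + (a * P1 + P2) := by nlinarith
      have hmul : Real.logb 2 ((1/a) * (1 + (a * P1 + P2)))
          = Real.logb 2 (1/a) + Real.logb 2 (1 + (a * P1 + P2)) :=
        Real.logb_mul (by positivity) (by positivity)
      have := Real.logb_le_logb_of_le (b := 2) one_lt_two hX hkey
      rw [hmul] at this
      unfold g; linarith
    · -- β2 ≤ b
      have hkey : 1 + P1 ≤ (1/a) * (1 + a * P1) := by
        rw [← sub_nonneg]
        have h1a : (1/a) * (1 + a * P1) - (1 + P1) = (1 - a)/a := by field_simp; ring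
        have h2a : (0:ℝ) < 1 - a := by linarith
        rw [h1a]; positivity
      have hX : (0:ℝ) < 1 + P1 := by linarith
      have hmul : Real.logb 2 ((1/a) * (1 + a * P1))
          = Real.logb 2 (1/a) + Real.logb 2 (1 + a * P1) :=
        Real.logb_mul (by positivity) (by positivity)
      have := Real.logb_le_logb_of_le (b := 2) one_lt_two hX hkey
      rw [hmul] at this
      unfold g; linarith
    · -- impossible branch
      exfalso
      apply h3
      have hden : (0:ℝ) < 1 + a * P1 + (1 - a) * P2 := by nlinarith
      have : a * (1 + P1) ≤ 1 + a * P1 + (1 - a) * P2 := by nlinarith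
      calc a * (1 + P1) / (1 + a * P1 + (1 - a) * P2) ≤ 1 := by
            rw [div_le_one hden]; exact this
        _ ≤ b := hb1
  · -- least upper bound
    intro x hx
    rcases lt_or_eq_of_le hb2 with hblt | hbeq
    · -- b < 1/a : use P2 = 0, P1 = t → ∞
      have hab' : a * b < 1 := by
        nlinarith [(lt_div_iff₀ ha0).mp hblt]
      have htend := half_logb_tendsto 1 1 1 a ha0 one_pos
      simp only [one_mul] at htend
      refine le_of_tendsto htend ?_
      filter_upwards [eventually_ge_atTop (0:ℝ), eventually_gt_atTop (b - 1),
        eventually_gt_atTop ((b-1)/(1-a*b))] with t ht0 ht1 ht2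
      have hdt : (0:ℝ) < 1 + a * t := by nlinarith
      have hc1 : ¬ (1 + t) / (1 + a * t) ≤ b := by
        rw [not_le, lt_div_iff₀ hdt]
        nlinarith [(div_lt_iff₀ (by nlinarith : (0:ℝ) < 1 - a*b)).mp ht2]
      have hc2 : a * (1 + t) / (1 + a * t + (1 - a) * 0) ≤ b := by
        rw [mul_zero, add_zero, div_le_iff₀ hdt]; nlinarith
      have hRs : Rs a b t 0 = g t - g (a * t) := by
        unfold Rs
        rw [if_neg (by linarith), if_neg (by linarith), if_neg (by linarith),
          if_neg hc1, if_pos hc2]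
      have hval : g t - g (a * t) = (1/2) * Real.logb 2 ((1 + t)/(1 + a * t)) := by
        unfold g
        rw [Real.logb_div (by linarith) (by linarith)]
        ring
      have hmem : g t - g (a * t) ∈
          {r : ℝ | ∃ P1 P2 : ℝ, 0 ≤ P1 ∧ 0 ≤ P2 ∧ r = Rs a b P1 P2} :=
        ⟨t, 0, ht0, le_refl 0, hRs.symm⟩
      have := hx hmem
      linarith [hval ▸ this]
    · -- b = 1/a : use P1 = 1/a, P2 = t → ∞
      subst hbeq
      have hia : (0:ℝ) < 1/a := by positivity
      have h1a : a * (1/a) = 1 := by field_simp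
      have htend := half_logb_tendsto (1 + 1/a) (1/a) 2 1 one_pos hia
      simp only [one_mul, div_one] at htend
      refine le_of_tendsto htend ?_
      filter_upwards [eventually_ge_atTop (0:ℝ)] with t ht0
      have hc1 : ¬ 1 + 1/a ≤ 1/a := by linarith
      have hc2 : (1 + 1/a) / (1 + a * (1/a)) ≤ 1/a := by
        rw [h1a, div_le_div_iff₀ (by norm_num) ha0]
        nlinarith
      have hRs : Rs a (1/a) (1/a) t
          = (1/2) * Real.logb 2 (((1 + 1/a) + (1/a)*t)/(2 + t)) := by
        unfold Rs
        rw [if_neg (by linarith), if_neg (by linarith), if_neg hc1, if_pos hc2]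
        unfold g
        rw [show (1:ℝ) + (1/a + (1/a)*t) = (1 + 1/a) + (1/a)*t from by ring,
          show (1:ℝ) + (a * (1/a) + t) = 2 + t from by rw [h1a]; ring,
          Real.logb_div (by positivity) (by positivity)]
        ring
      have hmem : (1/2) * Real.logb 2 (((1 + 1/a) + (1/a)*t)/(2 + t)) ∈
          {r : ℝ | ∃ P1 P2 : ℝ, 0 ≤ P1 ∧ 0 ≤ P2 ∧ r = Rs a (1/a) P1 P2} :=
        ⟨1/a, t, le_of_lt hia, ht0, hRs.symm⟩
      exact hx hmem
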